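/- Let d ≥ 2 and N ≥ 4, and let ρ be a positive semidefinite complex matrix indexed by (Fin N → Fin d) with trace 1 (an N-partite density matrix with d-dimensional local systems). Define the diagonal outcome distribution p(x) = ρ(x, x) for x : Fin N → Fin d, with marginals p_k(i) = Σ_{x : x(k) = i} p(x) for k ∈ Fin N and i ∈ Fin d. Suppose the Finner inequality holds: p(x) ≤ √( Π_{k=0}^{N−1} p_k(x(k)) ) for all x : Fin N → Fin d. Let |GHZ_{N,d}⟩ ∈ ℂ^(Fin N → Fin d) be given by |GHZ_{N,d}⟩(x) = 1/√d if x is constant and 0 otherwise. Then ⟨GHZ_{N,d}| ρ |GHZ_{N,d}⟩ ≤ 1/d. -/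

import Mathlib

open scoped BigOperators
open Matrix ComplexOrder

--- auxiliary lemmas
lemma psd_diag_re_nonneg {n : Type*} [Fintype n] [DecidableEq n]
    {ρ : Matrix n n ℂ} (hρ : ρ.PosSemidef) (x : n) : 0 ≤ (ρ x x).re := by
  have h := hρ.re_dotProduct_nonneg (Pi.single x 1)
  simpa [Matrix.mulVec_single, dotProduct, Pi.single_apply, apply_ite] using h

lemma psd_re_apply_le {n : Type*} [Fintype n] [DecidableEq n]
    {ρ : Matrix n n ℂ} (hρ : ρ.PosSemidef) (x y : n) :
    (ρ x y).re ≤ Real.sqrt ((ρ x x).re) * Real.sqrt ((ρ y y).re) := by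
  classical
  have hxx := psd_diag_re_nonneg hρ x
  have hyy := psd_diag_re_nonneg hρ y
  by_cases hxy : x = y
  · subst hxy
    rw [Real.mul_self_sqrt hxx]
  · have hyx : (ρ y x).re = (ρ x y).re := by
      have h2 : ρ y x = star (ρ x y) := by
        conv_lhs => rw [← hρ.1]
        simp [Matrix.conjTranspose_apply]
      rw [h2, Complex.star_def, Complex.conj_re]
    have key : ∀ s : ℝ, 0 ≤ (ρ x x).re * (s * s) + (2 * (ρ x y).re) * s + (ρ y y).re := by
      intro s
      have h0 := hρ.re_dotProduct_nonneg ((s : ℂ) • (Pi.single x 1 : n → ℂ) + Pi.single y 1)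
      have hexp : star ((s : ℂ) • (Pi.single x 1 : n → ℂ) + Pi.single y 1) ⬝ᵥ
          (ρ *ᵥ ((s : ℂ) • (Pi.single x 1 : n → ℂ) + Pi.single y 1))
          = ((s * s : ℝ) : ℂ) * ρ x x + ((s : ℝ) : ℂ) * ρ x y
            + ((s : ℝ) : ℂ) * ρ y x + ρ y y := by
        have hst : star ((s : ℂ) • (Pi.single x 1 : n → ℂ) + Pi.single y 1)
            = (s : ℂ) • (Pi.single x 1 : n → ℂ) + Pi.single y 1 := by
          funext z
          rcases eq_or_ne z x with rfl | hzx
          · simp [Pi.single_apply, hxy]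
          · rcases eq_or_ne z y with rfl | hzy
            · simp [Pi.single_apply, hxy, hzx]
            · simp [Pi.single_apply, hzx, hzy]
        rw [hst]
        simp only [Matrix.mulVec_add, Matrix.mulVec_smul, Matrix.mulVec_single,
          add_dotProduct, smul_dotProduct, dotProduct_add, dotProduct_smul,
          single_dotProduct, Pi.add_apply, Pi.smul_apply, smul_eq_mul,
          mul_one, one_mul, MulOpposite.op_one, one_smul, Matrix.col_apply]
        push_cast
        ring
      rw [hexp] at h0
      simp only [RCLike.re_to_complex, Complex.add_re, Complex.re_ofReal_mul] at h0
      rw [hyx] at h0; ring_nf at h0 ⊢; linarith [h0]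
    have hdisc := discrim_le_zero key
    rw [discrim] at hdisc
    have hb2 : (ρ x y).re ^ 2 ≤ (ρ x x).re * (ρ y y).re := by nlinarith
    calc (ρ x y).re ≤ |(ρ x y).re| := le_abs_self _
      _ = Real.sqrt ((ρ x y).re ^ 2) := (Real.sqrt_sq_eq_abs _).symm
      _ ≤ Real.sqrt ((ρ x x).re * (ρ y y).re) := Real.sqrt_le_sqrt hb2
      _ = _ := Real.sqrt_mul hxx _

/-- The `N`-partite `d`-level GHZ state: amplitude `1/√d` on constant functions,
`0` elsewhere. -/
noncomputable def ghzVec (N d : ℕ) : (Fin N → Fin d) → ℂ :=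
  fun x => if ∀ i j : Fin N, x i = x j then ((1 / Real.sqrt d : ℝ) : ℂ) else 0

/-- an `N`-partite density matrix (with `d`-level parties, `d ≥ 2`,
`N ≥ 4`) whose computational-basis outcome distribution satisfies the Finner inequality
has `GHZ_{N,d}` fidelity at most `1/d`. -/
theorem finner_ghzNd_fidelity_bound (d N : ℕ) (hd : 2 ≤ d) (hN : 4 ≤ N)
    (ρ : Matrix (Fin N → Fin d) (Fin N → Fin d) ℂ)
    (hρ : ρ.PosSemidef) (htr : ρ.trace = 1)
    (hfinner : ∀ x : Fin N → Fin d,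
      (ρ x x).re ≤
        Real.sqrt (∏ k : Fin N,
          ∑ y : Fin N → Fin d, if y k = x k then (ρ y y).re else 0)) :
    (star (ghzVec N d) ⬝ᵥ ρ *ᵥ ghzVec N d).re ≤ 1 / (d : ℝ) := by
  classical
  have hN0 : 0 < N := by omega
  have hd0 : 0 < d := by omega
  have hdR : (0:ℝ) < d := by exact_mod_cast hd0
  set p : (Fin N → Fin d) → ℝ := fun x => (ρ x x).re with hp
  have hp0 : ∀ x, 0 ≤ p x := fun x => psd_diag_re_nonneg hρ x
  have htrace_re : ∑ x, p x = 1 := by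
    have := congrArg Complex.re htr
    simpa [Matrix.trace, Matrix.diag, Complex.re_sum] using this
  -- marginals
  set q : Fin N → Fin d → ℝ := fun k i => ∑ y, if y k = i then p y else 0 with hq
  have hq0 : ∀ k i, 0 ≤ q k i := by
    intro k i
    exact Finset.sum_nonneg fun y _ => by split <;> simp [hp0 y]
  have hq1 : ∀ k i, q k i ≤ 1 := by
    intro k i
    rw [← htrace_re]
    exact Finset.sum_le_sum fun y _ => by split <;> simp [hp0 y]
  have hqsum : ∀ k, ∑ i, q k i = 1 := by
    intro k
    rw [hq]
    rw [Finset.sum_comm]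
    simpa [Finset.sum_ite_eq'] using htrace_re
  -- constant functions
  set c : Fin d → (Fin N → Fin d) := fun i _ => i with hc
  have hcinj : Function.Injective c := fun i j h => congrFun h ⟨0, hN0⟩
  have hfilter : Finset.univ.filter (fun x : Fin N → Fin d => ∀ i j : Fin N, x i = x j)
      = Finset.image c Finset.univ := by
    ext x
    simp only [Finset.mem_filter, Finset.mem_univ, true_and, Finset.mem_image]
    constructor
    · intro h
      exact ⟨x ⟨0, hN0⟩, funext fun k => h ⟨0, hN0⟩ k⟩
    · rintro ⟨i, rfl⟩ a b
      rfl
  have hsumconst : ∀ f : (Fin N → Fin d) → ℂ,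
      (∑ x, if ∀ i j : Fin N, x i = x j then f x else 0) = ∑ i, f (c i) := by
    intro f
    rw [← Finset.sum_filter, hfilter, Finset.sum_image (fun a _ b _ h => hcinj h)]
  -- fidelity expansion
  set r : ℂ := ((1 / Real.sqrt d : ℝ) : ℂ) with hr
  have hfid : star (ghzVec N d) ⬝ᵥ ρ *ᵥ ghzVec N d
      = ∑ i : Fin d, ∑ j : Fin d, ((1 / (d:ℝ) : ℝ) : ℂ) * ρ (c i) (c j) := by
    have h1 : star (ghzVec N d) ⬝ᵥ (ρ *ᵥ ghzVec N d)
        = ∑ x, if ∀ i j : Fin N, x i = x j then r * (ρ *ᵥ ghzVec N d) x else 0 := by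
      refine Finset.sum_congr rfl fun x _ => ?_
      simp only [Pi.star_apply, ghzVec]
      split <;> simp [hr, Complex.conj_ofReal]
    rw [h1, hsumconst]
    refine Finset.sum_congr rfl fun i _ => ?_
    have h2 : (ρ *ᵥ ghzVec N d) (c i)
        = ∑ y, if ∀ a b : Fin N, y a = y b then ρ (c i) y * r else 0 := by
      refine Finset.sum_congr rfl fun y _ => ?_
      simp only [ghzVec]
      split <;> simp [hr]
    rw [h2, hsumconst, Finset.mul_sum]
    refine Finset.sum_congr rfl fun j _ => ?_
    have hrr : r * r = ((1 / (d:ℝ) : ℝ) : ℂ) := by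
      rw [hr, ← Complex.ofReal_mul]
      congr 1
      rw [div_mul_div_comm, one_mul, Real.mul_self_sqrt hdR.le]
    calc r * (ρ (c i) (c j) * r) = (r * r) * ρ (c i) (c j) := by ring
      _ = _ := by rw [hrr]
  have hfidre : (star (ghzVec N d) ⬝ᵥ ρ *ᵥ ghzVec N d).re
      = (1 / (d:ℝ)) * ∑ i : Fin d, ∑ j : Fin d, (ρ (c i) (c j)).re := by
    rw [hfid, Complex.re_sum, Finset.mul_sum]
    refine Finset.sum_congr rfl fun i _ => ?_
    rw [Complex.re_sum, Finset.mul_sum]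
    exact Finset.sum_congr rfl fun j _ => Complex.re_ofReal_mul _ _
  -- the key bound on square roots of diagonal entries at constant functions
  set s : Fin d → ℝ := fun i => Real.sqrt (p (c i)) with hs
  have hs0 : ∀ i, 0 ≤ s i := fun i => Real.sqrt_nonneg _
  -- four distinct parties
  have h4 : ∀ j : ℕ, j < 4 → j < N := fun j hj => by omega
  set k0 : Fin N := ⟨0, h4 0 (by norm_num)⟩
  set k1 : Fin N := ⟨1, h4 1 (by norm_num)⟩
  set k2 : Fin N := ⟨2, h4 2 (by norm_num)⟩
  set k3 : Fin N := ⟨3, h4 3 (by norm_num)⟩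
  set S4 : Finset (Fin N) := {k0, k1, k2, k3} with hS4
  have hsbound : ∀ i : Fin d,
      s i ≤ (1/4) * (q k0 i + q k1 i + q k2 i + q k3 i) := by
    intro i
    have hfin : p (c i) ≤ Real.sqrt (∏ k : Fin N, q k i) := by
      have := hfinner (c i)
      simpa [hq, hp, hc] using this
    have hP0 : (0:ℝ) ≤ ∏ k : Fin N, q k i := Finset.prod_nonneg fun k _ => hq0 k i
    have hstep1 : s i ≤ Real.sqrt (Real.sqrt (∏ k : Fin N, q k i)) :=
      Real.sqrt_le_sqrt hfin
    have hsub : ∏ k : Fin N, q k i ≤ ∏ k ∈ S4, q k i := by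
      have hsubset : S4 ⊆ Finset.univ := Finset.subset_univ _
      rw [← Finset.prod_sdiff hsubset]
      have h1 : ∏ k ∈ Finset.univ \ S4, q k i ≤ 1 :=
        Finset.prod_le_one (fun k _ => hq0 k i) (fun k _ => hq1 k i)
      have h2 : 0 ≤ ∏ k ∈ S4, q k i := Finset.prod_nonneg fun k _ => hq0 k i
      nlinarith
    have hne01 : k0 ≠ k1 := by simp [k0, k1, Fin.ext_iff]
    have hne02 : k0 ≠ k2 := by simp [k0, k2, Fin.ext_iff]
    have hne03 : k0 ≠ k3 := by simp [k0, k3, Fin.ext_iff]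
    have hne12 : k1 ≠ k2 := by simp [k1, k2, Fin.ext_iff]
    have hne13 : k1 ≠ k3 := by simp [k1, k3, Fin.ext_iff]
    have hne23 : k2 ≠ k3 := by simp [k2, k3, Fin.ext_iff]
    have hprod4 : ∏ k ∈ S4, q k i = q k0 i * (q k1 i * (q k2 i * q k3 i)) := by
      rw [hS4]
      rw [Finset.prod_insert (by simp [hne01, hne02, hne03]),
        Finset.prod_insert (by simp [hne12, hne13]),
        Finset.prod_insert (by simp [hne23]), Finset.prod_singleton]
    have hP40 : 0 ≤ ∏ k ∈ S4, q k i := Finset.prod_nonneg fun k _ => hq0 k i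
    have hstep2 : Real.sqrt (Real.sqrt (∏ k : Fin N, q k i))
        ≤ Real.sqrt (Real.sqrt (∏ k ∈ S4, q k i)) :=
      Real.sqrt_le_sqrt (Real.sqrt_le_sqrt hsub)
    have hrpow : Real.sqrt (Real.sqrt (∏ k ∈ S4, q k i))
        = (q k0 i) ^ ((1:ℝ)/4) * (q k1 i) ^ ((1:ℝ)/4)
          * (q k2 i) ^ ((1:ℝ)/4) * (q k3 i) ^ ((1:ℝ)/4) := by
      rw [hprod4]
      have h40 := hq0 k0 i
      have h41 := hq0 k1 i
      have h42 := hq0 k2 i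
      have h43 := hq0 k3 i
      rw [Real.sqrt_eq_rpow, Real.sqrt_eq_rpow, ← Real.rpow_mul (by positivity)]
      have he : (1/2 : ℝ) * (1/2) = 1/4 := by norm_num
      rw [he, Real.mul_rpow h40 (by positivity), Real.mul_rpow h41 (by positivity),
        Real.mul_rpow h42 h43]
      ring
    have hgm : (q k0 i) ^ ((1:ℝ)/4) * (q k1 i) ^ ((1:ℝ)/4)
          * (q k2 i) ^ ((1:ℝ)/4) * (q k3 i) ^ ((1:ℝ)/4)
        ≤ (1/4) * q k0 i + (1/4) * q k1 i + (1/4) * q k2 i + (1/4) * q k3 i :=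
      Real.geom_mean_le_arith_mean4_weighted (by norm_num) (by norm_num) (by norm_num)
        (by norm_num) (hq0 k0 i) (hq0 k1 i) (hq0 k2 i) (hq0 k3 i) (by norm_num)
    calc s i ≤ Real.sqrt (Real.sqrt (∏ k : Fin N, q k i)) := hstep1
      _ ≤ Real.sqrt (Real.sqrt (∏ k ∈ S4, q k i)) := hstep2
      _ = _ := hrpow
      _ ≤ (1/4) * q k0 i + (1/4) * q k1 i + (1/4) * q k2 i + (1/4) * q k3 i := hgm
      _ = (1/4) * (q k0 i + q k1 i + q k2 i + q k3 i) := by ring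
  -- sum of square roots is at most 1
  have hssum : ∑ i, s i ≤ 1 := by
    calc ∑ i, s i ≤ ∑ i, (1/4) * (q k0 i + q k1 i + q k2 i + q k3 i) :=
          Finset.sum_le_sum fun i _ => hsbound i
      _ = 1 := by
          rw [← Finset.mul_sum, Finset.sum_add_distrib, Finset.sum_add_distrib,
            Finset.sum_add_distrib, hqsum, hqsum, hqsum, hqsum]
          norm_num
  have hssum0 : 0 ≤ ∑ i, s i := Finset.sum_nonneg fun i _ => hs0 i
  have hoff : ∀ i j : Fin d, (ρ (c i) (c j)).re ≤ s i * s j :=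
    fun i j => psd_re_apply_le hρ (c i) (c j)
  have hdouble : ∑ i : Fin d, ∑ j : Fin d, (ρ (c i) (c j)).re
      ≤ (∑ i, s i) * (∑ j, s j) := by
    rw [Finset.sum_mul_sum]
    exact Finset.sum_le_sum fun i _ => Finset.sum_le_sum fun j _ => hoff i j
  rw [hfidre]
  have hone : (∑ i, s i) * (∑ i, s i) ≤ 1 := mul_le_one₀ hssum hssum0 hssum
  calc (1 / (d:ℝ)) * ∑ i : Fin d, ∑ j : Fin d, (ρ (c i) (c j)).re
      ≤ (1 / (d:ℝ)) * 1 := by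
        apply mul_le_mul_of_nonneg_left _ (by positivity)
        exact le_trans hdouble hone
    _ = 1 / (d:ℝ) := mul_one _
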